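/- Kuratowski's function f is discontinuous at every point of D, i.e., at every x ∈ C whose support is finite. -/

import Mathlib

open Set Topology

/-- The Cantor space `2^ℕ`, with coordinates indexed by the positive integers. -/
abbrev Cant : Type := ℕ+ → Bool

/-- The support of a point of the Cantor space, as a set of (positive) natural numbers. -/
def ksupp (x : Cant) : Set ℕ := {i | ∃ h : 0 < i, x ⟨i, h⟩ = true}

open scoped Classical in
/-- Kuratowski's function `f(x) = Σ_j (−1)^{c_x(j)} 2^{−j}`, where `c_x` enumerates the
support of `x` in increasing order; here the summation index `j : ℕ` is the 0-based
version of the paper's 1-based position index, so the weight is `2^{−(j+1)}`. -/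
noncomputable def kf (x : Cant) : ℝ :=
  ∑' j : ℕ, if (ksupp x).Infinite ∨ j < (ksupp x).ncard then
    (-1 : ℝ) ^ (Nat.nth (· ∈ ksupp x) j) * (2 : ℝ) ^ (-(j + 1 : ℤ)) else 0

open scoped Classical

lemma kf_eq_sum (x : Cant) (hx : (ksupp x).Finite) :
    kf x = ∑ j ∈ Finset.range (ksupp x).ncard,
      (-1 : ℝ) ^ (Nat.nth (· ∈ ksupp x) j) * (2 : ℝ) ^ (-(j + 1 : ℤ)) := by
  rw [kf, tsum_eq_sum (s := Finset.range (ksupp x).ncard)]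
  · exact Finset.sum_congr rfl fun j hj => if_pos (Or.inr (Finset.mem_range.mp hj))
  · intro j hj
    exact if_neg (by push_neg; exact ⟨hx, Nat.le_of_not_lt fun h => hj (Finset.mem_range.mpr h)⟩)

lemma count_congr_of_lt {p q : ℕ → Prop} [DecidablePred p] [DecidablePred q] {a : ℕ}
    (h : ∀ i < a, (p i ↔ q i)) : Nat.count p a = Nat.count q a := by
  rw [Nat.count_eq_card_filter_range, Nat.count_eq_card_filter_range]
  congr 1
  exact Finset.filter_congr fun i hi => h i (Finset.mem_range.mp hi)

lemma setOf_mem_eq (S : Set ℕ) : {n | n ∈ S} = S := rfl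

lemma nth_insert_lt (S : Set ℕ) (hS : S.Finite) (m : ℕ) (hm : ∀ a ∈ S, a < m)
    {j : ℕ} (hj : j < S.ncard) :
    Nat.nth (· ∈ insert m S) j = Nat.nth (· ∈ S) j := by
  have hSf : {n | n ∈ S}.Finite := hS
  have hcard : j < hSf.toFinset.card := by
    rwa [Set.ncard_eq_toFinset_card S hSf] at hj
  set a := Nat.nth (· ∈ S) j with ha
  have haS : a ∈ S := Nat.nth_mem_of_lt_card hSf hcard
  have ham : a < m := hm a haS
  have hcount : Nat.count (· ∈ S) a = j := Nat.count_nth_of_lt_card_finite hSf hcard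
  have hcount' : Nat.count (· ∈ insert m S) a = j := by
    rw [count_congr_of_lt (q := (· ∈ S)) fun i hi => by
      simp only [Set.mem_insert_iff]
      constructor
      · rintro (rfl | h)
        · omega
        · exact h
      · exact Or.inr]
    exact hcount
  have : Nat.nth (· ∈ insert m S) (Nat.count (· ∈ insert m S) a) = a :=
    Nat.nth_count (Set.mem_insert_of_mem m haS)
  rwa [hcount'] at this

lemma nth_insert_top (S : Set ℕ) (hS : S.Finite) (m : ℕ) (hm : ∀ a ∈ S, a < m) :
    Nat.nth (· ∈ insert m S) S.ncard = m := by
  have hSf : {n | n ∈ S}.Finite := hS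
  have hcount : Nat.count (· ∈ insert m S) m = S.ncard := by
    rw [Nat.count_eq_card_filter_range]
    rw [Set.ncard_eq_toFinset_card S hSf]
    congr 1
    ext i
    simp only [Finset.mem_filter, Finset.mem_range, Set.mem_insert_iff,
      Set.Finite.mem_toFinset, Set.mem_setOf_eq]
    constructor
    · rintro ⟨hi, rfl | h⟩
      · omega
      · exact h
    · intro h
      exact ⟨hm i h, Or.inr h⟩
  have : Nat.nth (· ∈ insert m S) (Nat.count (· ∈ insert m S) m) = m :=
    Nat.nth_count (Set.mem_insert m S)
  rwa [hcount] at this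

/-- Kuratowski's function is discontinuous at every point of `D`,
i.e. at every point whose support is finite. -/
theorem kf_not_continuousAt_of_finite_support (x : Cant) (hx : (ksupp x).Finite) :
    ¬ ContinuousAt kf x := by
  intro hcont
  set S := ksupp x with hSdef
  set k := S.ncard with hk
  -- a strict upper bound for the support
  obtain ⟨M, hM⟩ : ∃ M, ∀ a ∈ S, a < M := by
    obtain ⟨B, hB⟩ := hx.bddAbove
    exact ⟨B + 1, fun a ha => Nat.lt_succ_of_le (hB ha)⟩
  -- the perturbation positions: even, large, tending to infinity
  set m : ℕ → ℕ := fun n => 2 * (M + n + 1) with hmdef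
  have hm_lt : ∀ n, ∀ a ∈ S, a < m n := fun n a ha => by
    have := hM a ha; simp only [hmdef]; omega
  have hm_pos : ∀ n, 0 < m n := fun n => by simp only [hmdef]; omega
  have hm_even : ∀ n, Even (m n) := fun n => ⟨M + n + 1, by ring⟩
  have hm_not_mem : ∀ n, m n ∉ S := fun n h => lt_irrefl _ (hm_lt n _ h)
  -- the perturbed points
  set y : ℕ → Cant := fun n i => if (i : ℕ) = m n then true else x i with hydef
  have hysupp : ∀ n, ksupp (y n) = insert (m n) S := by
    intro n
    ext i
    simp only [ksupp, Set.mem_setOf_eq, hydef, Set.mem_insert_iff, hSdef, PNat.mk_coe]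
    constructor
    · rintro ⟨hi, h⟩
      by_cases him : i = m n
      · exact Or.inl him
      · exact Or.inr ⟨hi, (if_neg him).symm.trans h⟩
    · rintro (rfl | ⟨hi, h⟩)
      · exact ⟨hm_pos n, if_pos rfl⟩
      · refine ⟨hi, ?_⟩
        by_cases him : i = m n
        · exact if_pos him
        · exact (if_neg him).trans h
  have hyfin : ∀ n, (ksupp (y n)).Finite := fun n => by
    rw [hysupp n]; exact hx.insert _
  have hycard : ∀ n, (ksupp (y n)).ncard = k + 1 := fun n => by
    rw [hysupp n, Set.ncard_insert_of_notMem (hm_not_mem n) hx]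
  -- the value of kf at the perturbed points
  have hkfy : ∀ n, kf (y n) = kf x + (2 : ℝ) ^ (-(k + 1 : ℤ)) := by
    intro n
    rw [kf_eq_sum (y n) (hyfin n), kf_eq_sum x hx, hycard n, Finset.sum_range_succ]
    have h1 : ∀ j ∈ Finset.range k,
        (-1 : ℝ) ^ (Nat.nth (· ∈ ksupp (y n)) j) * (2 : ℝ) ^ (-(j + 1 : ℤ)) =
        (-1 : ℝ) ^ (Nat.nth (· ∈ ksupp x) j) * (2 : ℝ) ^ (-(j + 1 : ℤ)) := by
      intro j hj
      rw [hysupp n, nth_insert_lt S hx (m n) (hm_lt n) (Finset.mem_range.mp hj)]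
    rw [Finset.sum_congr rfl h1]
    congr 1
    have h2 : Nat.nth (· ∈ ksupp (y n)) k = m n := by
      rw [hysupp n]; exact nth_insert_top S hx (m n) (hm_lt n)
    rw [h2, (hm_even n).neg_one_pow, one_mul]
  -- y n tends to x
  have hy_tendsto : Filter.Tendsto y Filter.atTop (nhds x) := by
    rw [tendsto_pi_nhds]
    intro i
    apply tendsto_const_nhds.congr'
    filter_upwards [Filter.eventually_ge_atTop (i : ℕ)] with n hn
    have : (i : ℕ) ≠ m n := by simp only [hmdef]; omega
    simp only [hydef, if_neg this]
  -- derive the contradiction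
  have hlim : Filter.Tendsto (fun n => kf (y n)) Filter.atTop (nhds (kf x)) :=
    (hcont.tendsto).comp hy_tendsto
  have hlim' : Filter.Tendsto (fun n => kf (y n)) Filter.atTop
      (nhds (kf x + (2 : ℝ) ^ (-(k + 1 : ℤ)))) := by
    simp only [hkfy]; exact tendsto_const_nhds
  have := tendsto_nhds_unique hlim hlim'
  have hpos : (0 : ℝ) < (2 : ℝ) ^ (-(k + 1 : ℤ)) := zpow_pos (by norm_num) _
  linarith
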